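/- Let c be a constraint system on 3-element subsets of a finite set V, |V| = n, with values in [0,1], and define b(π,v,p) = Σ over 2-subsets Q of V\{v} of c(Q ↦ π ⊕ v ↦ p). For any two rankings π, π' of V, any vertex v, and any non-integer p, with L, R, d(π,π') as in the FAST crossing lemma: the number of 2-subsets Q of V\{v} such that either Q ∩ (L∪R) ≠ ∅ or Q contains a pair ordered differently by π and π' is at most 2√(d(π,π'))·(n−2) + d(π,π'). Consequently |b(π,v,p) − b(π',v,p)| ≤ 2√(d(π,π'))·(n−2) + d(π,π'). -/

import Mathlib

open scoped Classical

noncomputable def pos {V : Type*} [Fintype V] (π : V ≃ Fin (Fintype.card V)) (v : V) : ℝ :=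
  ((π v : ℕ) : ℝ) + 1

def kendall {V : Type*} [Fintype V] (π π' : V ≃ Fin (Fintype.card V)) : ℕ :=
  (Finset.univ.filter (fun uv : V × V => π uv.1 < π uv.2 ∧ π' uv.2 < π' uv.1)).card

noncomputable def b3 {V : Type*} [Fintype V] [DecidableEq V]
    (c : Finset V → (V → ℝ) → ℝ) (f : V → ℝ) (v : V) (p : ℝ) : ℝ :=
  ∑ Q ∈ (Finset.univ.erase v).powersetCard 2, c (insert v Q) (Function.update f v p)

theorem stmt12 {V : Type*} [Fintype V] [DecidableEq V]
    (c : Finset V → (V → ℝ) → ℝ)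
    (h01 : ∀ (S : Finset V) (f : V → ℝ), 0 ≤ c S f ∧ c S f ≤ 1)
    (horder : ∀ (S : Finset V) (f g : V → ℝ),
      (∀ u ∈ S, ∀ u' ∈ S, (f u < f u' ↔ g u < g u')) → c S f = c S g)
    (π π' : V ≃ Fin (Fintype.card V)) (v : V) (p : ℝ) (hp : ∀ z : ℤ, (z : ℝ) ≠ p) :
    (((((Finset.univ.erase v).powersetCard 2).filter (fun Q =>
          (∃ u ∈ Q, (pos π u < p ∧ p < pos π' u) ∨ (pos π' u < p ∧ p < pos π u)) ∨
          (∃ u ∈ Q, ∃ u' ∈ Q, pos π u < pos π u' ∧ pos π' u' < pos π' u))).card : ℝ)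
        ≤ 2 * Real.sqrt (kendall π π') * ((Fintype.card V : ℝ) - 2) + (kendall π π' : ℝ))
    ∧ |b3 c (pos π) v p - b3 c (pos π') v p|
        ≤ 2 * Real.sqrt (kendall π π') * ((Fintype.card V : ℝ) - 2) + (kendall π π' : ℝ) := by
  classical
  -- basic facts about pos
  have hnep : ∀ (σ : V ≃ Fin (Fintype.card V)) (u : V), pos σ u ≠ p := by
    intro σ u h
    apply hp ((σ u : ℕ) + 1)
    rw [← h]; unfold pos; push_cast; ring
  have hlt : ∀ (σ : V ≃ Fin (Fintype.card V)) (u u' : V),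
      pos σ u < pos σ u' ↔ σ u < σ u' := by
    intro σ u u'
    unfold pos
    rw [add_lt_add_iff_right, Nat.cast_lt, Fin.lt_def]
  have hinj : ∀ (σ : V ≃ Fin (Fintype.card V)) (u u' : V),
      pos σ u = pos σ u' → u = u' := by
    intro σ u u' h
    apply σ.injective
    unfold pos at h
    have : ((σ u : ℕ) : ℝ) = ((σ u' : ℕ) : ℝ) := by linarith
    exact Fin.ext (by exact_mod_cast this)
  set L : Finset V := Finset.univ.filter (fun u : V => pos π u < p ∧ p < pos π' u) with hLdef
  set R : Finset V := Finset.univ.filter (fun u : V => pos π' u < p ∧ p < pos π u) with hRdef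
  -- |L| = |R|
  have hbelow : ∀ σ : V ≃ Fin (Fintype.card V),
      (Finset.univ.filter fun u : V => pos σ u < p).card
        = (Finset.univ.filter fun k : Fin (Fintype.card V) => ((k : ℕ) : ℝ) + 1 < p).card := by
    intro σ
    refine Finset.card_bij' (fun u _ => σ u) (fun k _ => σ.symm k) ?_ ?_ ?_ ?_ <;>
      simp [pos, Finset.mem_filter]
    · intro a ha; exact (Finset.mem_filter.mp ha).2
    · intro a ha; exact Finset.mem_filter.mpr ⟨Finset.mem_univ _, by simpa using ha⟩
  have hLeq : L = (Finset.univ.filter fun u : V => pos π u < p) \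
      (Finset.univ.filter fun u : V => pos π' u < p) := by
    ext u
    simp only [hLdef, Finset.mem_filter, Finset.mem_sdiff, Finset.mem_univ, true_and]
    have hne := hnep π' u
    constructor
    · rintro ⟨h1, h2⟩
      exact ⟨h1, fun h3 => absurd (h3.trans h2) (lt_irrefl _)⟩
    · rintro ⟨h1, h2⟩
      exact ⟨h1, lt_of_le_of_ne (not_lt.mp h2) (Ne.symm hne)⟩
  have hReq : R = (Finset.univ.filter fun u : V => pos π' u < p) \
      (Finset.univ.filter fun u : V => pos π u < p) := by
    ext u
    simp only [hRdef, Finset.mem_filter, Finset.mem_sdiff, Finset.mem_univ, true_and]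
    have hne := hnep π u
    constructor
    · rintro ⟨h1, h2⟩
      exact ⟨h1, fun h3 => absurd (h3.trans h2) (lt_irrefl _)⟩
    · rintro ⟨h1, h2⟩
      exact ⟨h1, lt_of_le_of_ne (not_lt.mp h2) (Ne.symm hne)⟩
  have hLRcard : L.card = R.card := by
    rw [hLeq, hReq]
    have e1 := Finset.card_sdiff_add_card_inter
      (Finset.univ.filter fun u : V => pos π u < p)
      (Finset.univ.filter fun u : V => pos π' u < p)
    have e2 := Finset.card_sdiff_add_card_inter
      (Finset.univ.filter fun u : V => pos π' u < p)
      (Finset.univ.filter fun u : V => pos π u < p)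
    rw [Finset.inter_comm] at e2
    have e3 := hbelow π
    have e4 := hbelow π'
    omega
  -- L × R injects into kendall pairs
  have hprod : L.card * R.card ≤ kendall π π' := by
    rw [← Finset.card_product]
    unfold kendall
    apply Finset.card_le_card
    rintro ⟨u, u'⟩ h
    rw [Finset.mem_product] at h
    obtain ⟨h1, h2⟩ := h
    rw [hLdef, Finset.mem_filter] at h1
    rw [hRdef, Finset.mem_filter] at h2
    obtain ⟨-, hu1, hu2⟩ := h1
    obtain ⟨-, hv1, hv2⟩ := h2
    rw [Finset.mem_filter]
    exact ⟨Finset.mem_univ _, (hlt π u u').mp (hu1.trans hv2),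
      (hlt π' u' u).mp (hv1.trans hu2)⟩
  have hLs : (L.card : ℝ) ≤ Real.sqrt (kendall π π') := by
    apply Real.le_sqrt_of_sq_le
    have h2 : ((L.card * R.card : ℕ) : ℝ) ≤ ((kendall π π' : ℕ) : ℝ) := by
      exact_mod_cast hprod
    push_cast at h2
    have hc : (L.card : ℝ) = (R.card : ℝ) := by exact_mod_cast hLRcard
    nlinarith
  have hRs : (R.card : ℝ) ≤ Real.sqrt (kendall π π') := by
    have hc : (R.card : ℝ) = (L.card : ℝ) := by exact_mod_cast hLRcard.symm
    rw [hc]; exact hLs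
  -- Counting bound (part 1)
  set P2 : Finset (Finset V) := (Finset.univ.erase v).powersetCard 2 with hP2def
  set F : Finset (Finset V) := P2.filter (fun Q =>
      (∃ u ∈ Q, (pos π u < p ∧ p < pos π' u) ∨ (pos π' u < p ∧ p < pos π u)) ∨
      (∃ u ∈ Q, ∃ u' ∈ Q, pos π u < pos π u' ∧ pos π' u' < pos π' u)) with hFdef
  have hcard_erase : (Finset.univ.erase v).card = Fintype.card V - 1 := by
    rw [Finset.card_erase_of_mem (Finset.mem_univ v), Finset.card_univ]
  -- crossing Q's
  have hA : (P2.filter (fun Q =>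
      ∃ u ∈ Q, (pos π u < p ∧ p < pos π' u) ∨ (pos π' u < p ∧ p < pos π u))).card
      ≤ (L.card + R.card) * (Fintype.card V - 2) := by
    have hsub : P2.filter (fun Q =>
        ∃ u ∈ Q, (pos π u < p ∧ p < pos π' u) ∨ (pos π' u < p ∧ p < pos π u))
        ⊆ ((L ∪ R) ∩ (Finset.univ.erase v)).biUnion
          (fun u => ((Finset.univ.erase v).erase u).image (fun w => ({u, w} : Finset V))) := by
      intro Q hQ
      rw [Finset.mem_filter, hP2def, Finset.mem_powersetCard] at hQ
      obtain ⟨⟨hQsub, hQcard⟩, u, huQ, hu⟩ := hQ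
      have huLR : u ∈ L ∪ R := by
        rw [Finset.mem_union, hLdef, hRdef, Finset.mem_filter, Finset.mem_filter]
        rcases hu with h | h
        · exact Or.inl ⟨Finset.mem_univ _, h⟩
        · exact Or.inr ⟨Finset.mem_univ _, h⟩
      have huv : u ∈ Finset.univ.erase v := hQsub huQ
      have h1 : (Q.erase u).card = 1 := by
        rw [Finset.card_erase_of_mem huQ, hQcard]
      obtain ⟨w, hw⟩ := Finset.card_eq_one.mp h1
      have hwQ : w ∈ Q := (Finset.erase_subset u Q) (hw ▸ Finset.mem_singleton_self w)
      have hwu : w ≠ u := by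
        intro h
        have h2 := Finset.notMem_erase u Q
        rw [hw] at h2
        simp [h] at h2
      have hQeq : Q = {u, w} := by
        have h3 : insert u (Q.erase u) = Q := Finset.insert_erase huQ
        rw [← h3, hw]
      rw [Finset.mem_biUnion]
      refine ⟨u, Finset.mem_inter.mpr ⟨huLR, huv⟩, Finset.mem_image.mpr
        ⟨w, Finset.mem_erase.mpr ⟨hwu, hQsub hwQ⟩, hQeq.symm⟩⟩
    calc (P2.filter _).card ≤ _ := Finset.card_le_card hsub
      _ ≤ ∑ u ∈ (L ∪ R) ∩ (Finset.univ.erase v),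
            (((Finset.univ.erase v).erase u).image (fun w => ({u, w} : Finset V))).card :=
          Finset.card_biUnion_le
      _ ≤ ((L ∪ R) ∩ (Finset.univ.erase v)).card * (Fintype.card V - 2) := by
          apply Finset.sum_le_card_nsmul
          intro u hu
          rw [Finset.mem_inter] at hu
          calc (((Finset.univ.erase v).erase u).image _).card
              ≤ ((Finset.univ.erase v).erase u).card := Finset.card_image_le
            _ = Fintype.card V - 1 - 1 := by
                rw [Finset.card_erase_of_mem hu.2, hcard_erase]
            _ ≤ Fintype.card V - 2 := by omega
      _ ≤ (L.card + R.card) * (Fintype.card V - 2) := by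
          apply Nat.mul_le_mul_right
          calc ((L ∪ R) ∩ (Finset.univ.erase v)).card ≤ (L ∪ R).card :=
                Finset.card_le_card Finset.inter_subset_left
            _ ≤ L.card + R.card := Finset.card_union_le L R
  -- discordant Q's
  have hB : (P2.filter (fun Q =>
      ∃ u ∈ Q, ∃ u' ∈ Q, pos π u < pos π u' ∧ pos π' u' < pos π' u)).card
      ≤ kendall π π' := by
    have hsub : P2.filter (fun Q =>
        ∃ u ∈ Q, ∃ u' ∈ Q, pos π u < pos π u' ∧ pos π' u' < pos π' u)
        ⊆ (Finset.univ.filter (fun uv : V × V => π uv.1 < π uv.2 ∧ π' uv.2 < π' uv.1)).image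
            (fun uv : V × V => ({uv.1, uv.2} : Finset V)) := by
      intro Q hQ
      rw [Finset.mem_filter, hP2def, Finset.mem_powersetCard] at hQ
      obtain ⟨⟨hQsub, hQcard⟩, u, huQ, u', hu'Q, h1, h2⟩ := hQ
      have hneq : u ≠ u' := by
        intro h; subst h; exact lt_irrefl _ h1
      have hsub2 : ({u, u'} : Finset V) ⊆ Q := by
        intro x hx
        rcases Finset.mem_insert.mp hx with rfl | hx
        · exact huQ
        · rw [Finset.mem_singleton] at hx; subst hx; exact hu'Q
      have hc2 : ({u, u'} : Finset V).card = 2 := by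
        rw [Finset.card_insert_of_notMem (by simpa using hneq), Finset.card_singleton]
      have hQeq : Q = {u, u'} :=
        (Finset.eq_of_subset_of_card_le hsub2 (by rw [hQcard, hc2])).symm
      rw [Finset.mem_image]
      refine ⟨(u, u'), Finset.mem_filter.mpr ⟨Finset.mem_univ _,
        (hlt π u u').mp h1, (hlt π' u' u).mp h2⟩, hQeq.symm⟩
    calc _ ≤ _ := Finset.card_le_card hsub
      _ ≤ _ := Finset.card_image_le
      _ = kendall π π' := rfl
  have hnatbound : (F.card : ℕ)
      ≤ (L.card + R.card) * (Fintype.card V - 2) + kendall π π' := by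
    rw [hFdef, Finset.filter_or]
    calc _ ≤ _ := Finset.card_union_le _ _
      _ ≤ _ := Nat.add_le_add hA hB
  have part1 : ((F.card : ℕ) : ℝ)
      ≤ 2 * Real.sqrt (kendall π π') * ((Fintype.card V : ℝ) - 2) + (kendall π π' : ℝ) := by
    rcases le_or_gt 2 (Fintype.card V) with hn | hn
    · have hcast : (((Fintype.card V - 2 : ℕ)) : ℝ) = (Fintype.card V : ℝ) - 2 := by
        push_cast [Nat.cast_sub hn]
        ring
      have h1 : ((F.card : ℕ) : ℝ)
          ≤ ((L.card : ℝ) + R.card) * ((Fintype.card V : ℝ) - 2) + (kendall π π' : ℝ) := by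
        calc ((F.card : ℕ) : ℝ)
            ≤ (((L.card + R.card) * (Fintype.card V - 2) + kendall π π' : ℕ) : ℝ) := by
              exact_mod_cast hnatbound
          _ = ((L.card : ℝ) + R.card) * ((Fintype.card V : ℝ) - 2) + (kendall π π' : ℝ) := by
              push_cast [Nat.cast_sub hn]; ring
      have hn2 : (0 : ℝ) ≤ (Fintype.card V : ℝ) - 2 := by
        have : (2 : ℝ) ≤ (Fintype.card V : ℝ) := by exact_mod_cast hn
        linarith
      calc ((F.card : ℕ) : ℝ) ≤ _ := h1
        _ ≤ 2 * Real.sqrt (kendall π π') * ((Fintype.card V : ℝ) - 2) + (kendall π π' : ℝ) := by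
            nlinarith [hLs, hRs]
    · -- Fintype.card V = 1, everything degenerate
      have hn1 : Fintype.card V = 1 := by
        have : 0 < Fintype.card V := Fintype.card_pos_iff.mpr ⟨v⟩
        omega
      have hall : ∀ a b : V, a = b := by
        intro a b
        apply π.injective
        have : Subsingleton (Fin (Fintype.card V)) := by rw [hn1]; infer_instance
        exact Subsingleton.elim _ _
      have hk0 : kendall π π' = 0 := by
        unfold kendall
        rw [Finset.card_eq_zero]
        ext uv
        simp only [Finset.mem_filter, Finset.notMem_empty, iff_false, not_and]
        intro _
        rw [hall uv.1 uv.2]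
        simp
      have hempty : P2 = ∅ := by
        rw [hP2def, Finset.powersetCard_eq_empty, hcard_erase, hn1]
        omega
      rw [hFdef, hempty, Finset.filter_empty, Finset.card_empty, hk0]
      norm_num
  refine ⟨part1, ?_⟩
  -- Part 2: bound on |b3 - b3|
  have hupdate : ∀ Q ∈ P2, (¬ ((∃ u ∈ Q, (pos π u < p ∧ p < pos π' u) ∨
        (pos π' u < p ∧ p < pos π u)) ∨
      (∃ u ∈ Q, ∃ u' ∈ Q, pos π u < pos π u' ∧ pos π' u' < pos π' u))) →
      c (insert v Q) (Function.update (pos π) v p)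
        = c (insert v Q) (Function.update (pos π') v p) := by
    intro Q hQ hnot
    have h1 : ¬ ∃ u ∈ Q, (pos π u < p ∧ p < pos π' u) ∨ (pos π' u < p ∧ p < pos π u) :=
      fun h => hnot (Or.inl h)
    have h2 : ¬ ∃ u ∈ Q, ∃ u' ∈ Q, pos π u < pos π u' ∧ pos π' u' < pos π' u :=
      fun h => hnot (Or.inr h)
    rw [hP2def, Finset.mem_powersetCard] at hQ
    obtain ⟨hQsub, hQcard⟩ := hQ
    have hval : ∀ x ∈ Q, x ≠ v := fun x hx => (Finset.mem_erase.mp (hQsub hx)).1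
    have hcross1 : ∀ u ∈ Q, (p < pos π u ↔ p < pos π' u) := by
      intro u hu
      have hA : ¬(pos π u < p ∧ p < pos π' u) := fun h => h1 ⟨u, hu, Or.inl h⟩
      have hB : ¬(pos π' u < p ∧ p < pos π u) := fun h => h1 ⟨u, hu, Or.inr h⟩
      have e1 := hnep π u
      have e2 := hnep π' u
      constructor
      · intro h
        by_contra h'
        exact hB ⟨lt_of_le_of_ne (not_lt.mp h') e2, h⟩
      · intro h
        by_contra h'
        exact hA ⟨lt_of_le_of_ne (not_lt.mp h') e1, h⟩
    have hcross2 : ∀ u ∈ Q, (pos π u < p ↔ pos π' u < p) := by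
      intro u hu
      have e1 := hnep π u
      have e2 := hnep π' u
      constructor
      · intro h
        by_contra h'
        exact absurd ((hcross1 u hu).mpr (lt_of_le_of_ne (not_lt.mp h') (Ne.symm e2)))
          (not_lt.mpr h.le)
      · intro h
        by_contra h'
        exact absurd ((hcross1 u hu).mp (lt_of_le_of_ne (not_lt.mp h') (Ne.symm e1)))
          (not_lt.mpr h.le)
    have hord : ∀ u ∈ Q, ∀ u' ∈ Q, (pos π u < pos π u' ↔ pos π' u < pos π' u') := by
      intro u hu u' hu'
      have hD1 : ¬(pos π u < pos π u' ∧ pos π' u' < pos π' u) :=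
        fun h => h2 ⟨u, hu, u', hu', h⟩
      have hD2 : ¬(pos π u' < pos π u ∧ pos π' u < pos π' u') :=
        fun h => h2 ⟨u', hu', u, hu, h⟩
      by_cases he : u = u'
      · subst he; simp
      · have n1 : pos π u ≠ pos π u' := fun h => he (hinj π _ _ h)
        have n2 : pos π' u ≠ pos π' u' := fun h => he (hinj π' _ _ h)
        constructor
        · intro h
          by_contra h'
          exact hD1 ⟨h, lt_of_le_of_ne (not_lt.mp h') (Ne.symm n2)⟩
        · intro h
          by_contra h'
          exact hD2 ⟨lt_of_le_of_ne (not_lt.mp h') (Ne.symm n1), h⟩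
    apply horder
    intro u hu u' hu'
    rcases Finset.mem_insert.mp hu with rfl | huQ
    · rcases Finset.mem_insert.mp hu' with heq | hu'Q
      · subst heq
        simp
      · have h' := hval u' hu'Q
        rw [Function.update_self, Function.update_self,
          Function.update_of_ne h', Function.update_of_ne h']
        exact hcross1 u' hu'Q
    · have hne := hval u huQ
      rcases Finset.mem_insert.mp hu' with rfl | hu'Q
      · rw [Function.update_of_ne hne, Function.update_of_ne hne,
          Function.update_self, Function.update_self]
        exact hcross2 u huQ
      · have hne' := hval u' hu'Q
        rw [Function.update_of_ne hne, Function.update_of_ne hne,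
          Function.update_of_ne hne', Function.update_of_ne hne']
        exact hord u huQ u' hu'Q
  have hb3 : b3 c (pos π) v p - b3 c (pos π') v p
      = ∑ Q ∈ F, (c (insert v Q) (Function.update (pos π) v p)
          - c (insert v Q) (Function.update (pos π') v p)) := by
    rw [b3, b3, ← Finset.sum_sub_distrib, hFdef]
    symm
    apply Finset.sum_filter_of_ne
    intro Q hQ hne
    by_contra hnp
    exact hne (sub_eq_zero_of_eq (hupdate Q hQ hnp))
  rw [hb3]
  calc |∑ Q ∈ F, (c (insert v Q) (Function.update (pos π) v p)
          - c (insert v Q) (Function.update (pos π') v p))|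
      ≤ ∑ Q ∈ F, |c (insert v Q) (Function.update (pos π) v p)
          - c (insert v Q) (Function.update (pos π') v p)| :=
        Finset.abs_sum_le_sum_abs _ _
    _ ≤ F.card • (1 : ℝ) := by
        apply Finset.sum_le_card_nsmul
        intro Q _
        have ha := h01 (insert v Q) (Function.update (pos π) v p)
        have hb := h01 (insert v Q) (Function.update (pos π') v p)
        rw [abs_sub_le_iff]
        constructor <;> linarith [ha.1, ha.2, hb.1, hb.2]
    _ = (F.card : ℝ) := by simp
    _ ≤ _ := part1
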